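/- Let A₁,…,A_M ∈ R^{n×n} be nonnegative matrices, l ≥ 1, γ > 0, and v ∈ R^n strictly positive such that A_{i_l}⋯A_{i_1} v ≤ γ^l v componentwise for every word (i₁,…,i_l) ∈ {1,…,M}^l. For each word a = (i₁,…,i_{l−1}) of length l−1 define v_a := v + γ^{−1} A_{i_{l−1}} v + γ^{−2} A_{i_{l−1}}A_{i_{l−2}} v + ⋯ + γ^{−(l−1)} A_{i_{l−1}}⋯A_{i_1} v. Then each v_a is strictly positive and for every word a = (i₁,…,i_{l−1}) and every j ∈ {1,…,M}, A_j v_a ≤ γ · v_b componentwise, where b = (i₂,…,i_{l−1},j). -/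

import Mathlib

/-- `wordApply A [i_l, …, i_1] x = A_{i_l} ⋯ A_{i_1} x`. -/
def wordApply {n M : ℕ} (A : Fin M → Matrix (Fin n) (Fin n) ℝ) :
    List (Fin M) → (Fin n → ℝ) → Fin n → ℝ
  | [], x => x
  | i :: rest, x => (A i).mulVec (wordApply A rest x)

/-- For a word `a = (i₁, …, i_{l-1})`, represented by the list
`[i_{l-1}, …, i₁]`, the node function
`v_a = v + γ⁻¹ A_{i_{l-1}} v + ⋯ + γ^{-(l-1)} A_{i_{l-1}} ⋯ A_{i_1} v`. -/
noncomputable def vDB {n M : ℕ} (A : Fin M → Matrix (Fin n) (Fin n) ℝ) (γ : ℝ)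
    (v : Fin n → ℝ) (a : List (Fin M)) : Fin n → ℝ :=
  fun idx => ∑ k ∈ Finset.range (a.length + 1),
    (γ ^ k)⁻¹ * wordApply A (a.take k) v idx

lemma wordApply_nonneg {n M : ℕ} (A : Fin M → Matrix (Fin n) (Fin n) ℝ)
    (hA : ∀ m i j, 0 ≤ A m i j) (v : Fin n → ℝ) (hv : ∀ i, 0 ≤ v i) :
    ∀ w : List (Fin M), ∀ idx, 0 ≤ wordApply A w v idx := by
  intro w
  induction w with
  | nil => exact hv
  | cons i rest ih =>
    intro idx
    simp only [wordApply, Matrix.mulVec, dotProduct]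
    exact Finset.sum_nonneg fun p _ => mul_nonneg (hA i idx p) (ih p)

/-- If `g*_v` decays with rate `γ^l` along every product of length `l`, then
the functions `v_a` indexed by words of length `l-1` (words
`a = (i₁, …, i_{l-1})` are represented as lists `[i_{l-1}, …, i₁]`; the De
Bruijn successor `(i₂, …, i_{l-1}, j)` is then `j :: a.dropLast`) are strictly
positive and satisfy the De Bruijn dual-copositive Lyapunov inequalities with
rate `γ`. -/
theorem deBruijn_construction {n M l : ℕ} (hl : 1 ≤ l)
    (A : Fin M → Matrix (Fin n) (Fin n) ℝ) (hA : ∀ m i j, 0 ≤ A m i j)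
    (γ : ℝ) (hγ : 0 < γ) (v : Fin n → ℝ) (hv : ∀ i, 0 < v i)
    (hword : ∀ w : List (Fin M), w.length = l →
      ∀ idx, wordApply A w v idx ≤ γ ^ l * v idx) :
    ∀ a : List (Fin M), a.length = l - 1 →
      (∀ idx, 0 < vDB A γ v a idx) ∧
      (∀ j : Fin M, ∀ idx,
        (A j).mulVec (vDB A γ v a) idx ≤ γ * vDB A γ v (j :: a.dropLast) idx) := by
  intro a ha
  have hwnn := wordApply_nonneg A hA v (fun i => (hv i).le)
  constructor
  · intro idx
    unfold vDB
    rw [Finset.sum_range_succ']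
    have h0 : ((γ ^ 0)⁻¹ * wordApply A (a.take 0) v idx) = v idx := by
      simp [wordApply]
    rw [h0]
    have hrest : 0 ≤ ∑ i ∈ Finset.range a.length,
        (γ ^ (i + 1))⁻¹ * wordApply A (a.take (i + 1)) v idx :=
      Finset.sum_nonneg fun i _ =>
        mul_nonneg (inv_nonneg.2 (pow_nonneg hγ.le _)) (hwnn _ idx)
    linarith [hv idx]
  · intro j idx
    have hLHS : (A j).mulVec (vDB A γ v a) idx
        = ∑ k ∈ Finset.range (a.length + 1),
            (γ ^ k)⁻¹ * wordApply A ((j :: a).take (k + 1)) v idx := by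
      simp only [Matrix.mulVec, dotProduct, vDB, List.take_succ_cons, wordApply,
        Finset.mul_sum]
      rw [Finset.sum_comm]
      exact Finset.sum_congr rfl fun k _ => Finset.sum_congr rfl fun p _ => by ring
    rw [hLHS]
    rcases eq_or_ne a [] with rfl | hane
    · -- l = 1 case
      simp only [List.dropLast_nil, List.length_nil, List.length_cons, vDB]
      rw [Finset.sum_range_succ, Finset.sum_range_succ, Finset.sum_range_succ,
        Finset.sum_range_zero, Finset.sum_range_zero]
      simp only [List.take_succ_cons, List.take_nil, List.take_zero, pow_zero, inv_one,
        one_mul, pow_one, wordApply]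
      have h1 : γ * (v idx + γ⁻¹ * (A j).mulVec v idx)
          = γ * v idx + (A j).mulVec v idx := by
        field_simp
      have h2 : γ * (0 + v idx + γ⁻¹ * (A j).mulVec v idx)
          = γ * v idx + (A j).mulVec v idx := by
        field_simp
        ring
      rw [h2]
      linarith [mul_pos hγ (hv idx)]
    · -- l ≥ 2 case
      have hL : 1 ≤ a.length := List.length_pos_iff.2 hane
      have hla : l = a.length + 1 := by omega
      have hblen : (j :: a.dropLast).length = a.length := by
        simp [List.length_dropLast]
        omega
      have htake : ∀ k, k < a.length →
          (j :: a).take (k + 1) = (j :: a.dropLast).take (k + 1) := by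
        intro k hk
        simp only [List.take_succ_cons]
        congr 1
        rw [List.dropLast_eq_take, List.take_take]
        congr 1
        omega
      unfold vDB
      rw [hblen]
      rw [Finset.mul_sum]
      rw [Finset.sum_range_succ]   -- LHS last term
      rw [Finset.sum_range_succ']  -- RHS first term
      have hrw : ∀ k ∈ Finset.range a.length,
          (γ ^ k)⁻¹ * wordApply A ((j :: a).take (k + 1)) v idx
          = γ * ((γ ^ (k + 1))⁻¹ *
              wordApply A ((j :: a.dropLast).take (k + 1)) v idx) := by
        intro k hk
        rw [htake k (Finset.mem_range.1 hk)]
        rw [pow_succ]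
        field_simp
      rw [Finset.sum_congr rfl hrw]
      have hlast : (γ ^ a.length)⁻¹ * wordApply A ((j :: a).take (a.length + 1)) v idx
          ≤ γ * ((γ ^ 0)⁻¹ * wordApply A ((j :: a.dropLast).take 0) v idx) := by
        have hfull : (j :: a).take (a.length + 1) = j :: a := by
          apply List.take_of_length_le
          simp
        rw [hfull]
        simp only [List.take_zero, pow_zero, inv_one, one_mul]
        have hw := hword (j :: a) (by simp [hla]) idx
        have hwv : wordApply A [] v idx = v idx := rfl
        rw [hwv]
        have hpos : (0:ℝ) < γ ^ a.length := pow_pos hγ _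
        rw [inv_mul_le_iff₀ hpos]
        calc wordApply A (j :: a) v idx ≤ γ ^ l * v idx := hw
          _ = γ ^ a.length * (γ * v idx) := by rw [hla]; ring
      exact add_le_add (le_refl _) hlast
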